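/- If d_1,...,d_m are polynomials with coefficients in {0,1}, constant coefficients 1, ∏ d_i = ∑_{s=0}^t x^s, and some d_i has degree n, then no other d_j has degree n (all degrees are distinct), given each d_i is palindromic (coefficient of x^j equals coefficient of x^{deg - j}). -/

import Mathlib

open Polynomial Finset

lemma coeff_prod_nonneg' {ι : Type*} (s : Finset ι) (f : ι → ℝ[X])
    (h : ∀ i ∈ s, ∀ k, 0 ≤ (f i).coeff k) :
    ∀ k, 0 ≤ (∏ i ∈ s, f i).coeff k := by
  refine Finset.prod_induction f (fun P => ∀ k, 0 ≤ P.coeff k) ?_ ?_ h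
  · intro a b ha hb k
    rw [Polynomial.coeff_mul]
    exact Finset.sum_nonneg fun p _ => mul_nonneg (ha _) (hb _)
  · intro k
    rw [Polynomial.coeff_one]
    positivity

theorem distinct_degrees (m t : ℕ) (d : Fin m → ℝ[X])
    (hcoeff : ∀ i k, (d i).coeff k = 0 ∨ (d i).coeff k = 1)
    (h0 : ∀ i, (d i).coeff 0 = 1)
    (hpal : ∀ i j, j ≤ (d i).natDegree →
      (d i).coeff j = (d i).coeff ((d i).natDegree - j))
    (hprod : ∏ i, d i = ∑ s ∈ Finset.range (t + 1), (X : ℝ[X]) ^ s) :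
    ∀ i j, i ≠ j → 1 ≤ (d i).natDegree → (d i).natDegree ≠ (d j).natDegree := by
  intro i j hij hdeg heq
  set n := (d i).natDegree with hn
  have hnn : ∀ k l, (0:ℝ) ≤ (d k).coeff l := by
    intro k l; rcases hcoeff k l with h | h <;> simp [h]
  have hlead : ∀ k, (d k).coeff (d k).natDegree = 1 := by
    intro k
    have h := hpal k 0 (Nat.zero_le _)
    rw [Nat.sub_zero] at h
    rw [← h, h0 k]
  have hdin : (d i).coeff n = 1 := hlead i
  have hdjn : (d j).coeff n = 1 := by rw [heq]; exact hlead j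
  -- coefficient of d i * d j at n is at least 2
  have hij2 : (2:ℝ) ≤ (d i * d j).coeff n := by
    rw [Polynomial.coeff_mul]
    have hne : ((0:ℕ), n) ≠ (n, 0) := by
      intro h
      have := congrArg Prod.fst h
      simp at this
      omega
    have hsub : ({((0:ℕ), n), (n, 0)} : Finset (ℕ × ℕ)) ⊆ Finset.HasAntidiagonal.antidiagonal n := by
      intro p hp
      simp at hp
      rcases hp with h | h <;> simp [h]
    have hsum : ∑ p ∈ ({((0:ℕ), n), (n, 0)} : Finset (ℕ × ℕ)),
        (d i).coeff p.1 * (d j).coeff p.2 = 2 := by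
      rw [Finset.sum_pair hne]
      simp [h0, hdin, hdjn]
      norm_num
    rw [← hsum]
    exact Finset.sum_le_sum_of_subset_of_nonneg hsub
      (fun p _ _ => mul_nonneg (hnn _ _) (hnn _ _))
  -- split the product
  have hjmem : j ∈ (Finset.univ : Finset (Fin m)).erase i := by
    simp [Ne.symm hij]
  have hsplit : ∏ k, d k = d i * d j *
      ∏ k ∈ ((Finset.univ : Finset (Fin m)).erase i).erase j, d k := by
    rw [mul_assoc, Finset.mul_prod_erase _ _ hjmem,
      Finset.mul_prod_erase _ _ (Finset.mem_univ i)]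
  set R := ∏ k ∈ ((Finset.univ : Finset (Fin m)).erase i).erase j, d k with hR
  have hR0 : R.coeff 0 = 1 := by
    rw [Polynomial.coeff_zero_eq_eval_zero, Polynomial.eval_prod]
    rw [Finset.prod_congr rfl (fun k _ => by
      rw [← Polynomial.coeff_zero_eq_eval_zero, h0 k])]
    simp
  have hRnn : ∀ k, (0:ℝ) ≤ R.coeff k :=
    coeff_prod_nonneg' _ _ (fun k _ l => hnn k l)
  have hijnn : ∀ k, (0:ℝ) ≤ (d i * d j).coeff k := by
    intro k
    rw [Polynomial.coeff_mul]
    exact Finset.sum_nonneg fun p _ => mul_nonneg (hnn _ _) (hnn _ _)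
  have h2 : (2:ℝ) ≤ (∏ k, d k).coeff n := by
    rw [hsplit, Polynomial.coeff_mul]
    have hmem : ((n:ℕ), 0) ∈ Finset.HasAntidiagonal.antidiagonal n := by simp
    have := Finset.single_le_sum
      (f := fun p : ℕ × ℕ => (d i * d j).coeff p.1 * R.coeff p.2)
      (fun p _ => mul_nonneg (hijnn _) (hRnn _)) hmem
    simp only [hR0, mul_one] at this
    linarith
  have hle : (∏ k, d k).coeff n ≤ 1 := by
    rw [hprod, Polynomial.finset_sum_coeff]
    simp only [Polynomial.coeff_X_pow]
    rw [Finset.sum_ite_eq]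
    split <;> norm_num
  linarith
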